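/- Let n ≥ 2 be a real number, θ ∈ {0,1}, κ > 1, p ≥ 1, and for θ ∈ {0,1} define p_{θ,1} = κ/(1−θ) (with p_{1,1} = ∞, i.e. 1/p_{1,1} = 0), p_{θ,2} = p/(1+(p−1)θ), and r_θ = κnp/[κn − 2(κ−1)p − (κn − (κn−2)p)θ]_+ (with the convention c/0 = ∞). If 1 ≤ r < r_θ and r > p_{θ,2}, then −(n/2)·(1/p_{θ,2} − 1/r)·(1 − 1/p_{θ,1}) > −1. -/

import Mathlib

theorem stmt_8 (n κ p r θ : ℝ) (hn : 2 ≤ n) (hκ : 1 < κ) (hp : 1 ≤ p)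
    (hθ : θ = 0 ∨ θ = 1)
    (hr1 : 1 ≤ r)
    (hr2 : r * max (κ * n - 2 * (κ - 1) * p - (κ * n - (κ * n - 2) * p) * θ) 0 < κ * n * p)
    (hr3 : r > p / (1 + (p - 1) * θ)) :
    -(n / 2) * (1 / (p / (1 + (p - 1) * θ)) - 1 / r) * (1 - (1 - θ) / κ) > -1 := by
  have hp0 : 0 < p := by linarith
  have hr0 : 0 < r := by linarith
  have hκ0 : 0 < κ := by linarith
  rcases hθ with h | h <;> subst h
  · -- θ = 0
    simp only [mul_zero, add_zero, sub_zero, div_one] at hr2 hr3 ⊢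
    have hkey : n * (r - p) * (κ - 1) * κ < 2 * (p * r * κ) * κ := by
      rcases le_or_gt (κ * n - 2 * (κ - 1) * p) 0 with hA | hA
      · have h1 : (κ * n - 2 * (κ - 1) * p) * ((r - p) * (κ - 1)) ≤ 0 :=
          mul_nonpos_of_nonpos_of_nonneg hA
            (mul_nonneg (sub_pos.mpr hr3).le (sub_pos.mpr hκ).le)
        nlinarith [mul_pos hp0 hr0, mul_nonneg (sq_nonneg (κ - 1)) hp0.le,
          mul_nonneg (mul_nonneg (sq_nonneg (κ - 1)) hp0.le) (sub_pos.mpr hr3).le,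
          mul_pos (mul_pos hp0 hr0) hκ0]
      · rw [max_eq_left hA.le] at hr2
        nlinarith [mul_pos hp0 hr0, mul_pos (mul_pos hp0 hr0) hκ0,
          mul_lt_mul_of_pos_right hr2 (sub_pos.mpr hκ)]
    have hlt : (n / 2) * (1 / p - 1 / r) * (1 - 1 / κ) < 1 := by
      have heq : (n / 2) * (1 / p - 1 / r) * (1 - 1 / κ)
          = n * (r - p) * (κ - 1) / (2 * (p * r * κ)) := by
        rw [eq_div_iff (by positivity)]
        field_simp
        all_goals exact Or.inl (by ring)
      rw [heq, div_lt_one (by positivity)]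
      nlinarith [mul_pos (mul_pos hp0 hr0) hκ0]
    linarith [hlt]
  · -- θ = 1
    have hp1 : 1 + (p - 1) * 1 = p := by ring
    rw [hp1, div_self hp0.ne'] at hr3 ⊢
    have hmax : κ * n - 2 * (κ - 1) * p - (κ * n - (κ * n - 2) * p) * 1
        = p * κ * (n - 2) := by ring
    rw [hmax, max_eq_left (by nlinarith [mul_pos hp0 hκ0])] at hr2
    have hlt : (n / 2) * (1 / 1 - 1 / r) * (1 - (1 - 1) / κ) < 1 := by
      have heq : (n / 2) * (1 / 1 - 1 / r) * (1 - (1 - 1) / κ)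
          = n * (r - 1) / (2 * r) := by
        rw [eq_div_iff (by positivity)]
        field_simp
        all_goals ring
      rw [heq, div_lt_one (by positivity)]
      nlinarith [mul_pos hp0 hκ0]
    linarith [hlt]
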